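/- Let $\psi:\mathbb{R}\to\mathbb{C}$ with $\psi(0)=0$ and $\sqrt{|\psi|}$ subadditive, and set $\Psi^*(\ell) := \sup_{|\xi|\leq\ell}|\psi(\xi)|$. Then $\frac{1}{2}\frac{r^2}{1+r^2}\Psi^*(\ell) \leq \Psi^*(r\ell) \leq 2(1+r^2)\Psi^*(\ell)$ for all $r,\ell > 0$. -/

import Mathlib

open scoped ENNReal

/-- For `ψ` with `ψ(0) = 0` and `√|ψ|` subadditive, the maximum function
`Ψ*(ℓ) = sup_{|ξ|≤ℓ} |ψ(ξ)|` satisfies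
`(1/2) r²/(1+r²) Ψ*(ℓ) ≤ Ψ*(rℓ) ≤ 2 (1+r²) Ψ*(ℓ)` for all `r, ℓ > 0`. -/
theorem maximum_function_scaling (ψ : ℝ → ℂ) (hψ0 : ψ 0 = 0)
    (hsub : ∀ ξ η : ℝ,
      Real.sqrt (‖ψ (ξ + η)‖) ≤
        Real.sqrt (‖ψ ξ‖) + Real.sqrt (‖ψ η‖))
    (Ψ : ℝ → ℝ≥0∞)
    (hΨ : ∀ l : ℝ, Ψ l = ⨆ ξ : ℝ, ⨆ _ : |ξ| ≤ l, ENNReal.ofReal (‖ψ ξ‖)) :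
    ∀ r l : ℝ, 0 < r → 0 < l →
      ENNReal.ofReal ((1 / 2) * (r ^ 2 / (1 + r ^ 2))) * Ψ l ≤ Ψ (r * l) ∧
      Ψ (r * l) ≤ ENNReal.ofReal (2 * (1 + r ^ 2)) * Ψ l := by
  -- √|ψ(n η)| ≤ n √|ψ η|
  have hiter : ∀ (n : ℕ) (η : ℝ),
      Real.sqrt (‖ψ (n * η)‖) ≤ n * Real.sqrt (‖ψ η‖) := by
    intro n η
    induction n with
    | zero => simp [hψ0]
    | succ n ih =>
      have : ((n : ℝ) + 1) * η = (n : ℝ) * η + η := by ring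
      push_cast
      rw [this]
      calc Real.sqrt (‖ψ ((n : ℝ) * η + η)‖)
          ≤ Real.sqrt (‖ψ ((n : ℝ) * η)‖) + Real.sqrt (‖ψ η‖) :=
            hsub _ _
        _ ≤ n * Real.sqrt (‖ψ η‖) + Real.sqrt (‖ψ η‖) := by
            linarith
        _ = ((n : ℝ) + 1) * Real.sqrt (‖ψ η‖) := by ring
  -- monotonicity of Ψ
  have hmono : ∀ l l' : ℝ, l ≤ l' → Ψ l ≤ Ψ l' := by
    intro l l' h
    rw [hΨ l, hΨ l']
    exact iSup₂_le fun ξ hξ => le_iSup₂_of_le ξ (hξ.trans h) le_rfl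
  -- Ψ (n l) ≤ n² Ψ l
  have hnat : ∀ (n : ℕ) (l : ℝ), 0 < n → 0 < l →
      Ψ (n * l) ≤ ENNReal.ofReal ((n : ℝ) ^ 2) * Ψ l := by
    intro n l hn hl
    rw [hΨ (n * l)]
    refine iSup₂_le fun ξ hξ => ?_
    set η := ξ / n with hη
    have hnR : (0:ℝ) < n := by exact_mod_cast hn
    have hξη : ξ = n * η := by rw [hη, mul_div_assoc', eq_div_iff hnR.ne', mul_comm]
    have hηl : |η| ≤ l := by
      rw [hη, abs_div, abs_of_pos hnR, div_le_iff₀ hnR]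
      linarith [hξ]
    have h1 : ‖ψ ξ‖ ≤ (n : ℝ) ^ 2 * ‖ψ η‖ := by
      have h2 := hiter n η
      rw [← hξη] at h2
      have h3 : Real.sqrt (‖ψ ξ‖) ^ 2 ≤ ((n : ℝ) * Real.sqrt (‖ψ η‖)) ^ 2 := by
        apply sq_le_sq' <;> nlinarith [Real.sqrt_nonneg (‖ψ ξ‖),
          Real.sqrt_nonneg (‖ψ η‖)]
      rwa [Real.sq_sqrt (norm_nonneg _), mul_pow,
        Real.sq_sqrt (norm_nonneg _)] at h3
    calc ENNReal.ofReal (‖ψ ξ‖)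
        ≤ ENNReal.ofReal ((n : ℝ) ^ 2 * ‖ψ η‖) := ENNReal.ofReal_le_ofReal h1
      _ = ENNReal.ofReal ((n : ℝ) ^ 2) * ENNReal.ofReal (‖ψ η‖) := by
          rw [ENNReal.ofReal_mul (by positivity)]
      _ ≤ ENNReal.ofReal ((n : ℝ) ^ 2) * Ψ l := by
          gcongr
          rw [hΨ l]
          exact le_iSup₂_of_le η hηl le_rfl
  -- upper bound
  have hupper : ∀ r l : ℝ, 0 < r → 0 < l →
      Ψ (r * l) ≤ ENNReal.ofReal (2 * (1 + r ^ 2)) * Ψ l := by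
    intro r l hr hl
    set n := ⌈r⌉₊ with hn
    have hn0 : 0 < n := Nat.ceil_pos.mpr hr
    have hle : r ≤ n := Nat.le_ceil r
    have hlt : (n : ℝ) < r + 1 := Nat.ceil_lt_add_one hr.le
    calc Ψ (r * l) ≤ Ψ (n * l) := hmono _ _ (by nlinarith)
      _ ≤ ENNReal.ofReal ((n : ℝ) ^ 2) * Ψ l := hnat n l hn0 hl
      _ ≤ ENNReal.ofReal (2 * (1 + r ^ 2)) * Ψ l := by
          gcongr
          nlinarith [sq_nonneg (r - 1), hle, hlt, hr.le]
  intro r l hr hl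
  refine ⟨?_, hupper r l hr hl⟩
  have h := hupper r⁻¹ (r * l) (by positivity) (by positivity)
  have heq : r⁻¹ * (r * l) = l := by field_simp
  rw [heq] at h
  calc ENNReal.ofReal ((1 / 2) * (r ^ 2 / (1 + r ^ 2))) * Ψ l
      ≤ ENNReal.ofReal ((1 / 2) * (r ^ 2 / (1 + r ^ 2))) *
        (ENNReal.ofReal (2 * (1 + r⁻¹ ^ 2)) * Ψ (r * l)) := by gcongr
    _ = ENNReal.ofReal ((1 / 2) * (r ^ 2 / (1 + r ^ 2)) * (2 * (1 + r⁻¹ ^ 2))) * Ψ (r * l) := by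
        rw [← mul_assoc, ← ENNReal.ofReal_mul (by positivity)]
    _ = Ψ (r * l) := by
        have : (1 / 2 : ℝ) * (r ^ 2 / (1 + r ^ 2)) * (2 * (1 + r⁻¹ ^ 2)) = 1 := by
          field_simp
          ring
        rw [this, ENNReal.ofReal_one, one_mul]
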